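/- Let α, h, d, K be positive real constants with d ≥ h/α². Then the function H(x) := ( K·(1 − e^{−αx}) − K·α²·d/h ) / (α·x − 1 + e^{−αx}) is strictly increasing on (0,∞), H(x) → −∞ as x → 0⁺, and H(x) → 0 as x → ∞; consequently sup_{x>0} H(x) = 0 and the supremum is not attained. -/

import Mathlib

open Filter
open scoped Topology

/-- The dual functional of the fluid-queue example expressed through the
threshold: `H(x) = (K(1 - e^{-αx}) - Kα²d/h) / (αx - 1 + e^{-αx})`. -/
noncomputable def Hfun (α h d K x : ℝ) : ℝ :=
  (K * (1 - Real.exp (-α * x)) - K * α ^ 2 * d / h) /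
    (α * x - 1 + Real.exp (-α * x))

/-- Let `α, h, d, K > 0` with `d ≥ h/α²`.  Then `H` is strictly
increasing on `(0,∞)`, `H(x) → -∞` as `x → 0⁺`, and `H(x) → 0` as `x → ∞`;
consequently `sup_{x > 0} H(x) = 0` and the supremum is not attained. -/
theorem stmt16 (α h d K : ℝ) (hα : 0 < α) (hh : 0 < h) (hd : 0 < d) (hK : 0 < K)
    (hdh : h / α ^ 2 ≤ d) :
    StrictMonoOn (Hfun α h d K) (Set.Ioi 0) ∧
    Tendsto (Hfun α h d K) (𝓝[>] 0) atBot ∧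
    Tendsto (Hfun α h d K) atTop (𝓝 0) ∧
    IsLUB (Hfun α h d K '' Set.Ioi 0) 0 ∧
    (0 : ℝ) ∉ Hfun α h d K '' Set.Ioi 0 := by
  set C : ℝ := K * α ^ 2 * d / h with hCdef
  have hCK : K ≤ C := by
    rw [hCdef, le_div_iff₀ hh]
    have h1 : h ≤ d * α ^ 2 := (div_le_iff₀ (by positivity)).mp hdh
    nlinarith
  have hCpos : 0 < C := lt_of_lt_of_le hK hCK
  -- positivity of the denominator
  have hD : ∀ x : ℝ, 0 < x → 0 < α * x - 1 + Real.exp (-α * x) := by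
    intro x hx
    have hne : -α * x ≠ 0 := by
      have : 0 < α * x := by positivity
      intro hcon; rw [neg_mul] at hcon; linarith [neg_eq_zero.mp hcon]
    have := Real.add_one_lt_exp hne
    linarith
  -- negativity of the numerator
  have hN : ∀ x : ℝ, 0 < x → K * (1 - Real.exp (-α * x)) - C < 0 := by
    intro x hx
    have h1 : 0 < Real.exp (-α * x) := Real.exp_pos _
    nlinarith
  have hHneg : ∀ x : ℝ, 0 < x → Hfun α h d K x < 0 := by
    intro x hx
    have := hN x hx
    have := hD x hx
    exact div_neg_of_neg_of_pos (by simpa [hCdef] using hN x hx) (hD x hx)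
  -- derivative
  have hexp : ∀ x : ℝ, HasDerivAt (fun y => Real.exp (-α * y))
      (-α * Real.exp (-α * x)) x := by
    intro x
    have h1 : HasDerivAt (fun y : ℝ => -α * y) (-α) x := by
      simpa using (hasDerivAt_id x).const_mul (-α)
    simpa [mul_comm] using h1.exp
  have hder : ∀ x : ℝ, 0 < x → HasDerivAt (Hfun α h d K)
      ((K * (α * Real.exp (-α * x)) * (α * x - 1 + Real.exp (-α * x)) -
        (K * (1 - Real.exp (-α * x)) - C) * (α - α * Real.exp (-α * x))) /
        (α * x - 1 + Real.exp (-α * x)) ^ 2) x := by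
    intro x hx
    have hDne : α * x - 1 + Real.exp (-α * x) ≠ 0 := (hD x hx).ne'
    have hNd : HasDerivAt (fun y => K * (1 - Real.exp (-α * y)) - C)
        (K * (α * Real.exp (-α * x))) x := by
      have := (((hasDerivAt_const x (1 : ℝ)).sub (hexp x)).const_mul K).sub_const C
      exact this.congr_deriv (by ring)
    have hDd : HasDerivAt (fun y => α * y - 1 + Real.exp (-α * y))
        (α - α * Real.exp (-α * x)) x := by
      have := (((hasDerivAt_id x).const_mul α).sub_const 1).add (hexp x)
      exact this.congr_deriv (by ring)
    have heq : Hfun α h d K = fun y =>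
        (K * (1 - Real.exp (-α * y)) - C) / (α * y - 1 + Real.exp (-α * y)) := by
      funext y; rw [Hfun, hCdef]
    rw [heq]
    exact hNd.div hDd hDne
  -- positivity of the derivative
  have hderpos : ∀ x : ℝ, 0 < x →
      0 < (K * (α * Real.exp (-α * x)) * (α * x - 1 + Real.exp (-α * x)) -
        (K * (1 - Real.exp (-α * x)) - C) * (α - α * Real.exp (-α * x))) /
        (α * x - 1 + Real.exp (-α * x)) ^ 2 := by
    intro x hx
    have hDx := hD x hx
    have he0 : 0 < Real.exp (-α * x) := Real.exp_pos _
    have he1 : Real.exp (-α * x) < 1 := by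
      rw [Real.exp_lt_one_iff]
      have : 0 < α * x := by positivity
      linarith
    apply div_pos _ (by positivity)
    nlinarith [mul_pos (mul_pos hα hx) he0, mul_pos hK (mul_pos (mul_pos hα hx) he0),
      mul_nonneg (sub_nonneg.mpr hCK) (sub_pos.mpr he1).le]
  -- strict monotonicity
  have hmono : StrictMonoOn (Hfun α h d K) (Set.Ioi 0) := by
    apply StrictMonoOn.mono (s := Set.Ioi 0) ?_ le_rfl
    apply strictMonoOn_of_deriv_pos (convex_Ioi 0)
    · intro x hx
      exact ((hder x hx).differentiableAt.continuousAt).continuousWithinAt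
    · intro x hx
      rw [interior_Ioi] at hx
      rw [(hder x hx).deriv]
      exact hderpos x hx
  -- limit as x → 0⁺
  have hlim0 : Tendsto (Hfun α h d K) (𝓝[>] 0) atBot := by
    have hNc : Tendsto (fun x => K * (1 - Real.exp (-α * x)) - C) (𝓝[>] 0)
        (𝓝 (-C)) := by
      have hcont : Continuous (fun x : ℝ => K * (1 - Real.exp (-α * x)) - C) := by
        fun_prop
      have h0 : Tendsto (fun x : ℝ => K * (1 - Real.exp (-α * x)) - C) (𝓝[>] (0:ℝ))
          (𝓝 (K * (1 - Real.exp (-α * 0)) - C)) :=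
        (hcont.tendsto 0).mono_left (nhdsWithin_le_nhds (s := Set.Ioi (0:ℝ)))
      simpa using h0
    have hDc : Tendsto (fun x => α * x - 1 + Real.exp (-α * x)) (𝓝[>] 0) (𝓝[>] 0) := by
      rw [tendsto_nhdsWithin_iff]
      constructor
      · have hcont : Continuous (fun x : ℝ => α * x - 1 + Real.exp (-α * x)) := by
          fun_prop
        have := (hcont.tendsto 0).mono_left (nhdsWithin_le_nhds (s := Set.Ioi (0:ℝ)))
        simpa using this
      · filter_upwards [self_mem_nhdsWithin] with x hx
        exact hD x hx
    have hinv : Tendsto (fun x => (α * x - 1 + Real.exp (-α * x))⁻¹) (𝓝[>] 0)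
        atTop := tendsto_inv_nhdsGT_zero.comp hDc
    have := Tendsto.neg_mul_atTop (C := -C) (by linarith) hNc hinv
    refine this.congr fun x => ?_
    rw [Hfun, div_eq_mul_inv]
  -- limit as x → ∞
  have hlimtop : Tendsto (Hfun α h d K) atTop (𝓝 0) := by
    have hexp0 : Tendsto (fun x : ℝ => Real.exp (-α * x)) atTop (𝓝 0) := by
      apply Real.tendsto_exp_atBot.comp
      have h1 : Tendsto (fun x : ℝ => α * x) atTop atTop :=
        Tendsto.const_mul_atTop hα tendsto_id
      have h2 : Tendsto (fun x : ℝ => -(α * x)) atTop atBot :=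
        tendsto_neg_atTop_atBot.comp h1
      exact h2.congr fun x => by ring
    have hNc : Tendsto (fun x => K * (1 - Real.exp (-α * x)) - C) atTop
        (𝓝 (K - C)) := by
      have := ((hexp0.const_sub 1).const_mul K).sub_const C
      simpa using this
    have hDc : Tendsto (fun x => α * x - 1 + Real.exp (-α * x)) atTop atTop := by
      apply tendsto_atTop_mono (f := fun x => α * x - 1)
      · intro x
        have := (Real.exp_pos (-α * x)).le
        linarith
      · have : Tendsto (fun x : ℝ => α * x) atTop atTop :=
          Tendsto.const_mul_atTop hα tendsto_id
        exact tendsto_atTop_add_const_right _ (-1) this |>.congr (fun x => by ring)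
    have := hNc.div_atTop hDc
    exact this.congr fun x => by rw [Hfun]
  refine ⟨hmono, hlim0, hlimtop, ?_, ?_⟩
  · constructor
    · rintro y ⟨x, hx, rfl⟩
      exact (hHneg x hx).le
    · intro b hb
      refine le_of_tendsto hlimtop ?_
      filter_upwards [eventually_gt_atTop (0 : ℝ)] with x hx
      exact hb ⟨x, hx, rfl⟩
  · rintro ⟨x, hx, hxe⟩
    exact absurd hxe (hHneg x hx).ne
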